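/- Let A be an automorphism of ℤ² and θ an automorphism of the semidirect product ℤ² ⋊_A ℤ, and let G = (ℤ² ⋊_A ℤ) ⋊_θ ℤ. Then no finite-index subgroup of G admits a surjective group homomorphism onto ℤ⁵. (Group-theoretic form of: a mapping torus of a 3-manifold finitely covered by a torus bundle has virtual first Betti number at most 4.) -/

import Mathlib

/-- Every subgroup of `G` is generated by at most `n` elements. -/
def Gen (n : ℕ) (G : Type*) [Group G] : Prop :=
  ∀ H : Subgroup G, ∃ s : Finset G, s.card ≤ n ∧ Subgroup.closure (↑s) = H

lemma gen_of_injective {N G : Type*} [Group N] [Group G] {φ : N →* G}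
    (hφ : Function.Injective φ) {n : ℕ} (hN : Gen n N) :
    ∀ K : Subgroup G, K ≤ φ.range → ∃ s : Finset G, s.card ≤ n ∧ Subgroup.closure (↑s) = K := by
  intro K hK
  classical
  obtain ⟨s, hcard, hcl⟩ := hN (K.comap φ)
  refine ⟨s.image φ, (Finset.card_image_le).trans hcard, ?_⟩
  rw [Finset.coe_image, ← MonoidHom.map_closure, hcl, Subgroup.map_comap_eq,
    inf_eq_right.mpr hK]

lemma gen_ext {G Q : Type*} [Group G] [Group Q] (f : G →* Q) {m k : ℕ}
    (hker : ∀ K : Subgroup G, K ≤ f.ker → ∃ s : Finset G, s.card ≤ m ∧ Subgroup.closure (↑s) = K)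
    (hQ : Gen k Q) : Gen (m + k) G := by
  intro H
  classical
  obtain ⟨t, htcard, htcl⟩ := hQ (H.map f)
  have hpre : ∀ q ∈ t, ∃ h, h ∈ H ∧ f h = q := by
    intro q hq
    have : q ∈ H.map f := htcl ▸ Subgroup.subset_closure hq
    obtain ⟨h, hh, rfl⟩ := this
    exact ⟨h, hh, rfl⟩
  choose g hgH hgf using hpre
  obtain ⟨s, hscard, hscl⟩ := hker (H ⊓ f.ker) inf_le_right
  set T : Finset G := t.attach.image (fun q => g q.1 q.2) with hT
  have hTsub : (↑T : Set G) ⊆ H := by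
    intro x hx
    simp only [hT, Finset.coe_image, Set.mem_image] at hx
    obtain ⟨q, _, rfl⟩ := hx
    exact hgH q.1 q.2
  refine ⟨s ∪ T, ?_, ?_⟩
  · refine (Finset.card_union_le _ _).trans (add_le_add hscard ?_)
    exact (Finset.card_image_le.trans (by simp)).trans htcard
  · apply le_antisymm
    · rw [Subgroup.closure_le]
      intro x hx
      rcases Finset.mem_union.mp hx with h | h
      · exact (hscl ▸ Subgroup.subset_closure h : x ∈ H ⊓ f.ker).1
      · exact hTsub h
    · intro h hh
      have h1 : f h ∈ Subgroup.closure (f '' (↑T : Set G)) := by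
        have : f h ∈ H.map f := ⟨h, hh, rfl⟩
        rw [← htcl] at this
        refine Subgroup.closure_mono ?_ this
        intro q hq
        exact ⟨g q hq, by simp only [hT, Finset.coe_image, Set.mem_image]; exact ⟨⟨q, hq⟩, Finset.mem_coe.mpr (Finset.mem_attach _ _), rfl⟩, hgf q hq⟩
      rw [← MonoidHom.map_closure] at h1
      obtain ⟨x, hx, hfx⟩ := h1
      have hclT : Subgroup.closure (↑T : Set G) ≤ Subgroup.closure (↑(s ∪ T) : Set G) :=
        Subgroup.closure_mono (by intro a ha; exact Finset.mem_union_right _ ha)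
      have hxH : x ∈ H := by
        have := Subgroup.closure_le (K := H) |>.mpr hTsub hx
        exact this
      have hk : h * x⁻¹ ∈ H ⊓ f.ker := by
        constructor
        · exact H.mul_mem hh (H.inv_mem hxH)
        · simp [MonoidHom.mem_ker, hfx]
      have hk' : h * x⁻¹ ∈ Subgroup.closure (↑(s ∪ T) : Set G) := by
        rw [← hscl] at hk
        exact Subgroup.closure_mono (by intro a ha; exact Finset.mem_union_left _ ha) hk
      have := Subgroup.mul_mem _ hk' (hclT hx)
      simpa using this

lemma gen_one_cyclic {Q : Type*} [Group Q] [IsCyclic Q] : Gen 1 Q := by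
  intro L
  obtain ⟨g, hg⟩ := IsCyclic.exists_generator (α := ↥L)
  refine ⟨{(g : Q)}, by simp, ?_⟩
  have htop : Subgroup.closure ({g} : Set ↥L) = ⊤ := by
    rw [← Subgroup.zpowers_eq_closure]
    exact Subgroup.eq_top_iff' _ |>.mpr hg
  have := congrArg (Subgroup.map L.subtype) htop
  rw [MonoidHom.map_closure] at this
  rw [← MonoidHom.range_eq_map, Subgroup.range_subtype] at this
  simpa using this

/-- For a group `G` and an automorphism `α` of `G`, `G ⋊_α ℤ` is the semidirect product of
`G` with `ℤ` with respect to the homomorphism `ℤ → Aut G` sending `1` to `α`. -/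
abbrev ZSemidirect (G : Type*) [Group G] (α : G ≃* G) : Type _ :=
  SemidirectProduct G (Multiplicative ℤ) (zpowersHom (MulAut G) α)


lemma gen_semidirect {N Q : Type*} [Group N] [Group Q] (φ : Q →* MulAut N) {m k : ℕ}
    (hN : Gen m N) (hQ : Gen k Q) : Gen (m + k) (SemidirectProduct N Q φ) :=
  gen_ext SemidirectProduct.rightHom
    (fun K hK => gen_of_injective SemidirectProduct.inl_injective hN K
      (by rw [SemidirectProduct.range_inl_eq_ker_rightHom]; exact hK))
    hQ

lemma gen_two : Gen 2 (Multiplicative (ℤ × ℤ)) := by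
  have h := gen_ext (G := Multiplicative (ℤ × ℤ))
    (AddMonoidHom.toMultiplicative (AddMonoidHom.snd ℤ ℤ)) (m := 1) (k := 1)
    (fun K hK => gen_of_injective (φ := AddMonoidHom.toMultiplicative (AddMonoidHom.inl ℤ ℤ))
      (fun a b hab => by
        have : (Multiplicative.toAdd (AddMonoidHom.toMultiplicative (AddMonoidHom.inl ℤ ℤ) a)).1
            = (Multiplicative.toAdd (AddMonoidHom.toMultiplicative (AddMonoidHom.inl ℤ ℤ) b)).1 :=
          by rw [hab]
        simpa using this)
      gen_one_cyclic K
      (by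
        intro x hx
        have h2 : (Multiplicative.toAdd x).2 = 0 := hK hx
        refine ⟨Multiplicative.ofAdd (Multiplicative.toAdd x).1, ?_⟩
        simp only [AddMonoidHom.toMultiplicative_apply_apply]
        apply Multiplicative.toAdd.injective
        simp only [toAdd_ofAdd]
        exact Prod.ext rfl h2.symm))
    gen_one_cyclic
  exact h

set_option maxHeartbeats 1000000 in
lemma not_small_gen (u : Finset (Multiplicative (Fin 5 → ZMod 2)))
    (h : Subgroup.closure (↑u : Set (Multiplicative (Fin 5 → ZMod 2))) = ⊤) : 5 ≤ u.card := by
  classical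
  set u' : Finset (Fin 5 → ZMod 2) := u.image Multiplicative.toAdd with hu'
  have hspan : Submodule.span (ZMod 2) (↑u' : Set (Fin 5 → ZMod 2)) = ⊤ := by
    rw [Submodule.eq_top_iff']
    intro x
    have hx : Multiplicative.ofAdd x ∈ Subgroup.closure (↑u : Set _) := h ▸ Subgroup.mem_top _
    refine Subgroup.closure_induction
      (p := fun y _ => Multiplicative.toAdd y ∈ Submodule.span (ZMod 2) (↑u' : Set _))
      ?_ ?_ ?_ ?_ hx
    · intro y hy
      exact Submodule.subset_span (Finset.mem_coe.mpr
        (Finset.mem_image_of_mem Multiplicative.toAdd (Finset.mem_coe.mp hy)))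
    · exact Submodule.zero_mem _
    · intro a b _ _ ha hb; exact Submodule.add_mem _ ha hb
    · intro a _ ha; exact Submodule.neg_mem _ ha
  have h1 : ((↑u' : Set (Fin 5 → ZMod 2)).finrank (ZMod 2)) ≤ u'.card :=
    finrank_span_finset_le_card u'
  rw [Set.finrank, hspan, finrank_top] at h1
  have h2 : Module.finrank (ZMod 2) (Fin 5 → ZMod 2) = 5 := by
    simp [Module.finrank_pi]
  rw [h2] at h1
  exact h1.trans (Finset.card_image_le)

set_option maxHeartbeats 1000000 in
/-- Let `A` be an automorphism of `ℤ²`, `θ` an automorphism of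
`ℤ² ⋊_A ℤ`, and `G = (ℤ² ⋊_A ℤ) ⋊_θ ℤ`. Then no finite-index subgroup of `G` admits a
surjective homomorphism onto `ℤ⁵`. (Group-theoretic form of: a mapping torus of a
3-manifold finitely covered by a torus bundle has virtual first Betti number at most 4.) -/
theorem stmt14 (A : Multiplicative (ℤ × ℤ) ≃* Multiplicative (ℤ × ℤ))
    (θ : ZSemidirect (Multiplicative (ℤ × ℤ)) A ≃* ZSemidirect (Multiplicative (ℤ × ℤ)) A) :
    ∀ H : Subgroup (ZSemidirect (ZSemidirect (Multiplicative (ℤ × ℤ)) A) θ),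
      H.FiniteIndex →
      ∀ ψ : H →* Multiplicative (Fin 5 → ℤ), ¬Function.Surjective ψ := by
  intro H _ ψ hsurj
  classical
  have hG : Gen 4 (ZSemidirect (ZSemidirect (Multiplicative (ℤ × ℤ)) A) θ) := by
    have h3 : Gen 3 (ZSemidirect (Multiplicative (ℤ × ℤ)) A) :=
      gen_semidirect _ gen_two gen_one_cyclic
    exact gen_semidirect _ h3 gen_one_cyclic
  obtain ⟨s, hscard, hscl⟩ := hG H
  have hmem : ∀ g ∈ s, g ∈ H := fun g hg => hscl ▸ Subgroup.subset_closure hg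
  set t : Finset ↥H := s.attach.image (fun g => (⟨g.1, hmem g.1 g.2⟩ : ↥H)) with ht
  have htcard : t.card ≤ 4 := (Finset.card_image_le.trans (by simp)).trans hscard
  have httop : Subgroup.closure (↑t : Set ↥H) = ⊤ := by
    apply Subgroup.map_injective H.subtype_injective
    rw [MonoidHom.map_closure, ← MonoidHom.range_eq_map, Subgroup.range_subtype]
    have himg : H.subtype '' (↑t : Set ↥H) = (↑s : Set _) := by
      ext x
      constructor
      · rintro ⟨y, hy, rfl⟩
        simp only [ht, Finset.coe_image, Set.mem_image] at hy
        obtain ⟨g, _, rfl⟩ := hy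
        exact g.2
      · intro hx
        exact ⟨⟨x, hmem x hx⟩, by
          simp only [ht, Finset.coe_image, Set.mem_image]
          exact ⟨⟨x, hx⟩, Finset.mem_coe.mpr (Finset.mem_attach _ _), rfl⟩, rfl⟩
    rw [himg, hscl]
  set f2 : (Fin 5 → ℤ) →+ (Fin 5 → ZMod 2) :=
    { toFun := fun x i => ((x i : ℤ) : ZMod 2)
      map_zero' := by ext i; simp
      map_add' := by intro a b; ext i; simp } with hf2
  have hf2surj : Function.Surjective f2 := by
    intro y
    refine ⟨fun i => ((y i).val : ℤ), ?_⟩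
    ext i
    simp [hf2, ZMod.natCast_val, ZMod.cast_id]
  set χ : ↥H →* Multiplicative (Fin 5 → ZMod 2) :=
    (AddMonoidHom.toMultiplicative f2).comp ψ with hχ
  have hχsurj : Function.Surjective χ := fun y => by
    obtain ⟨x, hx⟩ := hf2surj (Multiplicative.toAdd y)
    obtain ⟨h, hh⟩ := hsurj (Multiplicative.ofAdd x)
    exact ⟨h, by simp [hχ, hh, hx]⟩
  set u : Finset (Multiplicative (Fin 5 → ZMod 2)) := t.image χ with hu
  have hutop : Subgroup.closure (↑u : Set (Multiplicative (Fin 5 → ZMod 2))) = ⊤ := by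
    rw [hu, Finset.coe_image, ← MonoidHom.map_closure, httop, ← MonoidHom.range_eq_map]
    exact MonoidHom.range_eq_top_of_surjective _ hχsurj
  have := not_small_gen u hutop
  have : (5 : ℕ) ≤ 4 := this.trans (Finset.card_image_le.trans htcard)
  omega
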